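/- Let λ* solve min_{λ∈Λ} g(λ) over a polyhedron Λ with strict complementarity at λ*. Then there exists r > 0 such that for every λ ∈ Λ with ‖λ − λ*‖ < r, the scaled gradient projection iterate (with bounded scaling eigenvalues in [t, T], 0 < t ≤ T < ∞, and step sizes in [α_min, 1], α_min > 0) has active set exactly A(λ*). In particular, any sequence generated by the gradient projection algorithm converging to λ* satisfies A(λᵏ) = A(λ*) for all sufficiently large k. -/

import Mathlib

open scoped RealInnerProductSpace
open Filter Classical

/-- `IsGPStep g' Λ tmin Tmax αmin lam μ` : `μ` is obtained from `lam` by one scaled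
gradient-projection step on `Λ`, with some step size in `[αmin, 1]` and some symmetric
positive definite scaling matrix whose eigenvalues lie in `[tmin, Tmax]`. -/
def IsGPStep {m : ℕ}
    (g' : EuclideanSpace ℝ (Fin m) → EuclideanSpace ℝ (Fin m))
    (Λ : Set (EuclideanSpace ℝ (Fin m))) (tmin Tmax αmin : ℝ)
    (lam μ : EuclideanSpace ℝ (Fin m)) : Prop :=
  ∃ α : ℝ, αmin ≤ α ∧ α ≤ 1 ∧
    ∃ S : Matrix (Fin m) (Fin m) ℝ, S.PosDef ∧
      (S - tmin • (1 : Matrix (Fin m) (Fin m) ℝ)).PosSemidef ∧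
      (Tmax • (1 : Matrix (Fin m) (Fin m) ℝ) - S).PosSemidef ∧
      μ ∈ Λ ∧
      IsMinOn (fun y => ⟪g' lam, y - lam⟫ +
        (1 / (2 * α)) * ⟪y - lam, Matrix.toEuclideanLin S⁻¹ (y - lam)⟫) Λ μ

section Helpers
open Matrix
variable {m : ℕ}


lemma inner_tel (P : Matrix (Fin m) (Fin m) ℝ) (x y : EuclideanSpace ℝ (Fin m)) :
    ⟪x, Matrix.toEuclideanLin P y⟫ =
      dotProduct (WithLp.equiv 2 _ x) (P *ᵥ (WithLp.equiv 2 _ y)) := by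
  rw [PiLp.inner_apply]
  exact Finset.sum_congr rfl fun i _ => mul_comm _ _

lemma quad_nonneg {P : Matrix (Fin m) (Fin m) ℝ} (hP : P.PosSemidef)
    (x : EuclideanSpace ℝ (Fin m)) : 0 ≤ ⟪x, Matrix.toEuclideanLin P x⟫ := by
  rw [inner_tel]
  simpa using hP.dotProduct_mulVec_nonneg (WithLp.equiv 2 _ x)

lemma tel_symm {P : Matrix (Fin m) (Fin m) ℝ} (hP : P.IsHermitian)
    (x y : EuclideanSpace ℝ (Fin m)) :
    ⟪Matrix.toEuclideanLin P x, y⟫ = ⟪x, Matrix.toEuclideanLin P y⟫ := by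
  have := (Matrix.isHermitian_iff_isSymmetric.mp hP) x y
  simpa using this

lemma quad_cs {P : Matrix (Fin m) (Fin m) ℝ} (hP : P.PosSemidef)
    (x y : EuclideanSpace ℝ (Fin m)) :
    ⟪x, Matrix.toEuclideanLin P y⟫ ^ 2 ≤
      ⟪x, Matrix.toEuclideanLin P x⟫ * ⟪y, Matrix.toEuclideanLin P y⟫ := by
  set T := Matrix.toEuclideanLin P with hT
  have hsym : ⟪y, T x⟫ = ⟪x, T y⟫ := by
    rw [← tel_symm hP.1, real_inner_comm]
  have key : ∀ t : ℝ, 0 ≤ ⟪x, T x⟫ * (t * t) + (2 * ⟪x, T y⟫) * t + ⟪y, T y⟫ := by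
    intro t
    have h0 := quad_nonneg hP (t • x + y)
    rw [← hT] at h0
    simp only [map_add, _root_.map_smul, inner_add_left, inner_add_right,
      real_inner_smul_left, real_inner_smul_right] at h0
    rw [hsym] at h0
    nlinarith [h0]
  have hd := discrim_le_zero key
  rw [discrim] at hd
  nlinarith [hd]

lemma tel_cancel {S : Matrix (Fin m) (Fin m) ℝ} (hS : S.PosDef)
    (x : EuclideanSpace ℝ (Fin m)) :
    Matrix.toEuclideanLin S (Matrix.toEuclideanLin S⁻¹ x) = x := by
  have hdet : IsUnit S.det := isUnit_iff_ne_zero.mpr hS.det_pos.ne'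
  have h1 : S * S⁻¹ = 1 := Matrix.mul_nonsing_inv S hdet
  rw [Matrix.toEuclideanLin_apply, Matrix.toEuclideanLin_apply]
  simp [Matrix.mulVec_mulVec, h1]

lemma tel_lower {S : Matrix (Fin m) (Fin m) ℝ} {tmin : ℝ}
    (h1 : (S - tmin • (1 : Matrix (Fin m) (Fin m) ℝ)).PosSemidef)
    (x : EuclideanSpace ℝ (Fin m)) :
    tmin * ‖x‖ ^ 2 ≤ ⟪x, Matrix.toEuclideanLin S x⟫ := by
  have h0 := quad_nonneg h1 x
  have he : Matrix.toEuclideanLin (S - tmin • (1 : Matrix (Fin m) (Fin m) ℝ)) x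
      = Matrix.toEuclideanLin S x - tmin • x := by
    have h1' : Matrix.toEuclideanLin (tmin • (1 : Matrix (Fin m) (Fin m) ℝ)) x = tmin • x := by
      rw [_root_.map_smul]
      simp [Matrix.toEuclideanLin_apply]
    rw [map_sub, LinearMap.sub_apply, h1']
  rw [he, inner_sub_right, real_inner_smul_right, real_inner_self_eq_norm_sq] at h0
  linarith

lemma tel_upper {S : Matrix (Fin m) (Fin m) ℝ} {Tmax : ℝ}
    (h2 : (Tmax • (1 : Matrix (Fin m) (Fin m) ℝ) - S).PosSemidef)
    (x : EuclideanSpace ℝ (Fin m)) :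
    ⟪x, Matrix.toEuclideanLin S x⟫ ≤ Tmax * ‖x‖ ^ 2 := by
  have h0 := quad_nonneg h2 x
  have he : Matrix.toEuclideanLin (Tmax • (1 : Matrix (Fin m) (Fin m) ℝ) - S) x
      = Tmax • x - Matrix.toEuclideanLin S x := by
    have h1' : Matrix.toEuclideanLin (Tmax • (1 : Matrix (Fin m) (Fin m) ℝ)) x = Tmax • x := by
      rw [_root_.map_smul]
      simp [Matrix.toEuclideanLin_apply]
    rw [map_sub, LinearMap.sub_apply, h1']
  rw [he, inner_sub_right, real_inner_smul_right, real_inner_self_eq_norm_sq] at h0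
  linarith

lemma telinv_norm_le {S : Matrix (Fin m) (Fin m) ℝ} {tmin : ℝ} (ht : 0 < tmin)
    (hS : S.PosDef)
    (h1 : (S - tmin • (1 : Matrix (Fin m) (Fin m) ℝ)).PosSemidef)
    (x : EuclideanSpace ℝ (Fin m)) :
    ‖Matrix.toEuclideanLin S⁻¹ x‖ ≤ tmin⁻¹ * ‖x‖ := by
  set y := Matrix.toEuclideanLin S⁻¹ x with hy
  have h2 : tmin * ‖y‖ ^ 2 ≤ ⟪y, x⟫ := by
    have := tel_lower h1 y
    rwa [tel_cancel hS] at this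
  have h3 : ⟪y, x⟫ ≤ ‖y‖ * ‖x‖ := real_inner_le_norm y x
  rcases eq_or_lt_of_le (norm_nonneg y) with h | h
  · rw [← h]
    positivity
  · have htinv : tmin⁻¹ * tmin = 1 := inv_mul_cancel₀ ht.ne'
    have h4 : tmin * ‖y‖ ≤ ‖x‖ := by nlinarith [h2, h3, h]
    have h5 := mul_le_mul_of_nonneg_left h4 (inv_nonneg.mpr ht.le)
    rw [← mul_assoc, htinv, one_mul] at h5
    exact h5

lemma telinv_lower {S : Matrix (Fin m) (Fin m) ℝ} {Tmax : ℝ} (hT : 0 < Tmax)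
    (hS : S.PosDef)
    (h2 : (Tmax • (1 : Matrix (Fin m) (Fin m) ℝ) - S).PosSemidef)
    (x : EuclideanSpace ℝ (Fin m)) :
    Tmax⁻¹ * ‖x‖ ^ 2 ≤ ⟪x, Matrix.toEuclideanLin S⁻¹ x⟫ := by
  set y := Matrix.toEuclideanLin S⁻¹ x with hy
  have hq0 : 0 ≤ ⟪x, y⟫ := quad_nonneg hS.inv.posSemidef x
  have hyy : ⟪y, Matrix.toEuclideanLin S y⟫ = ⟪x, y⟫ := by
    rw [tel_cancel hS, real_inner_comm]
  have hxx : ⟪x, Matrix.toEuclideanLin S y⟫ = ‖x‖ ^ 2 := by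
    rw [tel_cancel hS, real_inner_self_eq_norm_sq]
  have hcs := quad_cs hS.posSemidef x y
  rw [hxx, hyy] at hcs
  have hup := tel_upper h2 x
  rcases eq_or_lt_of_le (norm_nonneg x) with h | h
  · have : ‖x‖ ^ 2 = 0 := by rw [← h]; ring
    rw [this]
    simpa using hq0
  · have hx2 : 0 < ‖x‖ ^ 2 := by positivity
    have hTinv : Tmax⁻¹ * Tmax = 1 := inv_mul_cancel₀ hT.ne'
    nlinarith [hcs, mul_le_mul_of_nonneg_right hup hq0, mul_pos hT hx2, hTinv, hx2, hq0]

set_option maxHeartbeats 1000000 in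
lemma vi_of_isMinOn {p : ℕ} (a : Fin p → EuclideanSpace ℝ (Fin m)) (b : Fin p → ℝ)
    {α : ℝ} (hα : 0 < α) {S : Matrix (Fin m) (Fin m) ℝ} (hS : S.PosDef)
    (g lam : EuclideanSpace ℝ (Fin m)) {μ : EuclideanSpace ℝ (Fin m)}
    (hμ : ∀ j, ⟪a j, μ⟫ ≤ b j)
    (hmin : IsMinOn (fun y => ⟪g, y - lam⟫ +
      (1 / (2 * α)) * ⟪y - lam, Matrix.toEuclideanLin S⁻¹ (y - lam)⟫)
      {lam | ∀ j, ⟪a j, lam⟫ ≤ b j} μ)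
    {y : EuclideanSpace ℝ (Fin m)} (hy : ∀ j, ⟪a j, y⟫ ≤ b j) :
    0 ≤ ⟪g, y - μ⟫ + α⁻¹ * ⟪Matrix.toEuclideanLin S⁻¹ (μ - lam), y - μ⟫ := by
  set T := Matrix.toEuclideanLin S⁻¹ with hT
  have hsymh : S⁻¹.IsHermitian := hS.inv.1
  set d := y - μ with hd
  set u := μ - lam with hu
  set A := ⟪g, d⟫ + α⁻¹ * ⟪T u, d⟫ with hA
  set B := (1 / (2 * α)) * ⟪d, T d⟫ with hB
  have hB0 : 0 ≤ B := by
    have := quad_nonneg hS.inv.posSemidef d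
    rw [← hT] at this
    have : (0:ℝ) < 2 * α := by linarith
    positivity
  have step : ∀ t : ℝ, 0 < t → t ≤ 1 → 0 ≤ A + t * B := by
    intro t ht0 ht1
    set z := μ + t • d with hz
    have hzmem : z ∈ {lam | ∀ j, ⟪a j, lam⟫ ≤ b j} := by
      intro j
      have h1 := hμ j
      have h2 := hy j
      have : ⟪a j, z⟫ = ⟪a j, μ⟫ + t * (⟪a j, y⟫ - ⟪a j, μ⟫) := by
        rw [hz, inner_add_right, real_inner_smul_right, hd, inner_sub_right]
      rw [this]
      nlinarith [h1, h2, ht0, ht1]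
    have hfz := hmin hzmem
    simp only [Set.mem_setOf_eq] at hfz
    have hzlam : z - lam = u + t • d := by
      rw [hz, hu]; abel
    have e1 : ⟪g, z - lam⟫ = ⟪g, u⟫ + t * ⟪g, d⟫ := by
      rw [hzlam, inner_add_right, real_inner_smul_right]
    have hsym1 : ⟪u, T d⟫ = ⟪T u, d⟫ := (tel_symm hsymh u d).symm
    have hsym2 : ⟪d, T u⟫ = ⟪T u, d⟫ := real_inner_comm (T u) d
    have e2 : ⟪z - lam, T (z - lam)⟫ =
        ⟪u, T u⟫ + 2 * t * ⟪T u, d⟫ + t * t * ⟪d, T d⟫ := by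
      rw [hzlam]
      simp only [map_add, _root_.map_smul, inner_add_left, inner_add_right,
        real_inner_smul_left, real_inner_smul_right]
      rw [hsym1, hsym2]
      ring
    have hfμ : ⟪g, μ - lam⟫ + (1 / (2 * α)) * ⟪μ - lam, T (μ - lam)⟫ ≤
        ⟪g, z - lam⟫ + (1 / (2 * α)) * ⟪z - lam, T (z - lam)⟫ := hfz
    rw [e1, e2, ← hu] at hfμ
    have hkey : 0 ≤ t * ⟪g, d⟫ +
        (1 / (2 * α)) * (2 * t * ⟪T u, d⟫ + t * t * ⟪d, T d⟫) := by nlinarith [hfμ]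
    have hfact : t * (A + t * B) = t * ⟪g, d⟫ +
        (1 / (2 * α)) * (2 * t * ⟪T u, d⟫ + t * t * ⟪d, T d⟫) := by
      rw [hA, hB]
      field_simp
      ring
    have h0t : t * 0 ≤ t * (A + t * B) := by
      rw [mul_zero, hfact]; exact hkey
    exact le_of_mul_le_mul_left h0t ht0
  have hseq : ∀ n : ℕ, 0 ≤ A + (1 / ((n : ℝ) + 1)) * B := by
    intro n
    refine step _ (by positivity) ?_
    rw [div_le_one (by positivity)]
    linarith [Nat.cast_nonneg (α := ℝ) n]
  have htend : Tendsto (fun n : ℕ => A + (1 / ((n : ℝ) + 1)) * B) atTop (nhds A) := by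
    have h0 : Tendsto (fun n : ℕ => 1 / ((n : ℝ) + 1)) atTop (nhds 0) :=
      tendsto_one_div_add_atTop_nhds_zero_nat
    have := (h0.mul_const B).const_add A
    simpa using this
  have := ge_of_tendsto' htend hseq
  exact this

lemma vi_tangent {p : ℕ} (a : Fin p → EuclideanSpace ℝ (Fin m)) (b : Fin p → ℝ)
    {μ w : EuclideanSpace ℝ (Fin m)} (hμ : ∀ j, ⟪a j, μ⟫ ≤ b j)
    (hvi : ∀ y : EuclideanSpace ℝ (Fin m), (∀ j, ⟪a j, y⟫ ≤ b j) → 0 ≤ ⟪w, y - μ⟫)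
    {d : EuclideanSpace ℝ (Fin m)} (hd : ∀ j, ⟪a j, μ⟫ = b j → ⟪a j, d⟫ ≤ 0) :
    0 ≤ ⟪w, d⟫ := by
  classical
  set F : Finset (Fin p) := Finset.univ.filter (fun j => ⟪a j, μ⟫ ≠ b j) with hF
  set ε : ℝ := if hFne : F.Nonempty then
      min 1 (F.inf' hFne fun j => (b j - ⟪a j, μ⟫) / (|⟪a j, d⟫| + 1)) else 1 with hε
  have hδpos : ∀ j ∈ F, 0 < (b j - ⟪a j, μ⟫) / (|⟪a j, d⟫| + 1) := by
    intro j hj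
    rw [hF, Finset.mem_filter] at hj
    have h1 : ⟪a j, μ⟫ < b j := lt_of_le_of_ne (hμ j) hj.2
    have h2 : (0:ℝ) < |⟪a j, d⟫| + 1 := by positivity
    exact div_pos (by linarith) h2
  have hεpos : 0 < ε := by
    rw [hε]
    split_ifs with hFne
    · refine lt_min one_pos ?_
      rw [Finset.lt_inf'_iff]
      exact fun j hj => hδpos j hj
    · exact one_pos
  have hεle : ∀ j ∈ F, ε ≤ (b j - ⟪a j, μ⟫) / (|⟪a j, d⟫| + 1) := by
    intro j hj
    have hFne : F.Nonempty := ⟨j, hj⟩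
    rw [hε, dif_pos hFne]
    exact le_trans (min_le_right _ _) (Finset.inf'_le _ hj)
  have hymem : ∀ j, ⟪a j, μ + ε • d⟫ ≤ b j := by
    intro j
    rw [inner_add_right, real_inner_smul_right]
    by_cases hj : ⟪a j, μ⟫ = b j
    · have := hd j hj
      nlinarith [hεpos, this]
    · have hjF : j ∈ F := by rw [hF, Finset.mem_filter]; exact ⟨Finset.mem_univ _, hj⟩
      have h1 := hεle j hjF
      have h2 : (0:ℝ) < |⟪a j, d⟫| + 1 := by positivity
      have h3 : ε * (|⟪a j, d⟫| + 1) ≤ b j - ⟪a j, μ⟫ := by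
        rw [← le_div_iff₀ h2]; exact h1
      have h4 : ⟪a j, d⟫ ≤ |⟪a j, d⟫| := le_abs_self _
      nlinarith [hεpos, h4, h3, abs_nonneg ⟪a j, d⟫]
  have := hvi (μ + ε • d) hymem
  rw [add_sub_cancel_left, real_inner_smul_right] at this
  have h0t : ε * 0 ≤ ε * ⟪w, d⟫ := by rw [mul_zero]; exact this
  exact le_of_mul_le_mul_left h0t hεpos

end Helpers

set_option maxHeartbeats 1000000 in
theorem stmt6 {m p : ℕ}
    (a : Fin p → EuclideanSpace ℝ (Fin m)) (b : Fin p → ℝ)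
    (Λ : Set (EuclideanSpace ℝ (Fin m)))
    (hΛ : Λ = {lam | ∀ j, ⟪a j, lam⟫ ≤ b j}) (hΛne : Λ.Nonempty)
    (g : EuclideanSpace ℝ (Fin m) → ℝ)
    (g' : EuclideanSpace ℝ (Fin m) → EuclideanSpace ℝ (Fin m))
    (hg : ∀ x, HasGradientAt g (g' x) x)
    (hgcv : StrictConvexOn ℝ Set.univ g)
    (K : NNReal) (hlip : LipschitzWith K g')
    (tmin Tmax αmin : ℝ) (ht : 0 < tmin) (htT : tmin ≤ Tmax)
    (hαmin : 0 < αmin) (hα1 : αmin ≤ 1)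
    (lstar : EuclideanSpace ℝ (Fin m)) (hmem : lstar ∈ Λ)
    (hminstar : IsMinOn g Λ lstar)
    (A : Finset (Fin p)) (hA : A = Finset.univ.filter fun j => ⟪a j, lstar⟫ = b j)
    -- strict complementarity at `lstar`
    (c : Fin p → ℝ) (hcpos : ∀ j ∈ A, 0 < c j)
    (hkkt : g' lstar = -∑ j ∈ A, c j • a j) :
    (∃ r > (0 : ℝ), ∀ lam ∈ Λ, ‖lam - lstar‖ < r →
        ∀ μ, IsGPStep g' Λ tmin Tmax αmin lam μ →
          {j | ⟪a j, μ⟫ = b j} = {j | ⟪a j, lstar⟫ = b j}) ∧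
      ∀ lamseq : ℕ → EuclideanSpace ℝ (Fin m),
        (∀ k, lamseq k ∈ Λ) →
        (∀ k, IsGPStep g' Λ tmin Tmax αmin (lamseq k) (lamseq (k + 1))) →
        Tendsto lamseq atTop (nhds lstar) →
        ∀ᶠ k in atTop, {j | ⟪a j, lamseq k⟫ = b j} = {j | ⟪a j, lstar⟫ = b j} := by
  classical
  subst hΛ
  have hT0 : (0:ℝ) < Tmax := lt_of_lt_of_le ht htT
  have hKnn : (0:ℝ) ≤ (K : ℝ) := K.coe_nonneg
  have hAiff : ∀ j, j ∈ A ↔ ⟪a j, lstar⟫ = b j := by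
    intro j; rw [hA]; simp
  have hlstar : ∀ j, ⟪a j, lstar⟫ ≤ b j := hmem
  have hgl : ∀ x : EuclideanSpace ℝ (Fin m),
      ⟪g' lstar, x⟫ = -∑ j ∈ A, c j * ⟪a j, x⟫ := by
    intro x
    rw [hkkt, inner_neg_left, sum_inner]
    congr 1
    refine Finset.sum_congr rfl fun j _ => ?_
    rw [real_inner_smul_left]
  have hgstar_nonneg : ∀ μ : EuclideanSpace ℝ (Fin m), (∀ j, ⟪a j, μ⟫ ≤ b j) →
      0 ≤ ⟪g' lstar, μ - lstar⟫ := by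
    intro μ hμ
    rw [hgl, neg_nonneg]
    refine Finset.sum_nonpos fun j hj => ?_
    have h1 : ⟪a j, lstar⟫ = b j := (hAiff j).mp hj
    have h2 : ⟪a j, μ - lstar⟫ = ⟪a j, μ⟫ - b j := by rw [inner_sub_right, h1]
    have h3 := hμ j
    have hc := (hcpos j hj).le
    rw [h2]
    exact mul_nonpos_of_nonneg_of_nonpos hc (by linarith)
  have hlipn : ∀ x y : EuclideanSpace ℝ (Fin m), ‖g' x - g' y‖ ≤ (K : ℝ) * ‖x - y‖ := by
    intro x y
    have := hlip.dist_le_mul x y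
    rwa [dist_eq_norm, dist_eq_norm] at this
  have main : ∃ r > (0 : ℝ), ∀ lam ∈ {lam | ∀ j, ⟪a j, lam⟫ ≤ b j}, ‖lam - lstar‖ < r →
      ∀ μ, IsGPStep g' {lam | ∀ j, ⟪a j, lam⟫ ≤ b j} tmin Tmax αmin lam μ →
        {j | ⟪a j, μ⟫ = b j} = {j | ⟪a j, lstar⟫ = b j} := by
    by_contra hcon
    push_neg at hcon
    have hseq : ∀ n : ℕ, ∃ lam ∈ {lam | ∀ j, ⟪a j, lam⟫ ≤ b j},
        ‖lam - lstar‖ < 1 / ((n:ℝ)+1) ∧ ∃ μ,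
          IsGPStep g' {lam | ∀ j, ⟪a j, lam⟫ ≤ b j} tmin Tmax αmin lam μ ∧
          {j | ⟪a j, μ⟫ = b j} ≠ {j | ⟪a j, lstar⟫ = b j} := by
      intro n
      exact hcon (1 / ((n:ℝ)+1)) (by positivity)
    choose lam hlamfeas hlamnear μs hstep hne using hseq
    simp only [IsGPStep] at hstep
    choose α hαge hαle S hSpd hS1 hS2 hμfeas hmin using hstep
    have hαpos : ∀ n, 0 < α n := fun n => lt_of_lt_of_le hαmin (hαge n)
    have hμf : ∀ n j, ⟪a j, μs n⟫ ≤ b j := fun n => hμfeas n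
    have hlf : ∀ n j, ⟪a j, lam n⟫ ≤ b j := fun n => hlamfeas n
    set T : ℕ → EuclideanSpace ℝ (Fin m) →ₗ[ℝ] EuclideanSpace ℝ (Fin m) :=
      fun n => Matrix.toEuclideanLin (S n)⁻¹ with hTdef
    have hVI : ∀ n, ∀ y : EuclideanSpace ℝ (Fin m), (∀ j, ⟪a j, y⟫ ≤ b j) →
        0 ≤ ⟪g' (lam n), y - μs n⟫ + (α n)⁻¹ * ⟪T n (μs n - lam n), y - μs n⟫ :=
      fun n y hy =>
        vi_of_isMinOn a b (hαpos n) (hSpd n) (g' (lam n)) (lam n) (hμf n) (hmin n) hy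
    set w : ℕ → EuclideanSpace ℝ (Fin m) :=
      fun n => g' (lam n) + (α n)⁻¹ • T n (μs n - lam n) with hw
    have hVIw : ∀ n, ∀ y : EuclideanSpace ℝ (Fin m), (∀ j, ⟪a j, y⟫ ≤ b j) →
        0 ≤ ⟪w n, y - μs n⟫ := by
      intro n y hy
      have hthis := hVI n y hy
      have e : ⟪w n, y - μs n⟫ = ⟪g' (lam n), y - μs n⟫ +
          (α n)⁻¹ * ⟪T n (μs n - lam n), y - μs n⟫ := by
        simp only [hw]
        rw [inner_add_left, real_inner_smul_left]
      rw [e]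
      exact hthis
    set C := Tmax * ((K:ℝ) + tmin⁻¹) with hC
    have hC0 : 0 ≤ C := by positivity
    have hctr : ∀ n, ‖μs n - lstar‖ ≤ C * ‖lam n - lstar‖ := by
      intro n
      set u := μs n - lstar with hu
      set e := lam n - lstar with he
      have h0 := hVI n lstar hlstar
      have hml : lstar - μs n = -u := by rw [hu]; abel
      have hsplit : μs n - lam n = u - e := by rw [hu, he]; abel
      have e1 : ⟪g' (lam n), lstar - μs n⟫ =
          -(⟪g' (lam n) - g' lstar, u⟫ + ⟪g' lstar, u⟫) := by
        rw [hml, inner_neg_right, inner_sub_left]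
        ring
      have e2 : ⟪T n (μs n - lam n), lstar - μs n⟫ = -⟪T n u, u⟫ + ⟪T n e, u⟫ := by
        rw [hsplit, hml, map_sub, inner_sub_left, inner_neg_right, inner_neg_right]
        ring
      rw [e1, e2] at h0
      have b1 : -((K:ℝ) * ‖e‖ * ‖u‖) ≤ ⟪g' (lam n) - g' lstar, u⟫ := by
        have h2 := abs_real_inner_le_norm (g' (lam n) - g' lstar) u
        have h3 := hlipn (lam n) lstar
        rw [← he] at h3
        have h4 := abs_le.mp h2
        nlinarith [h4.1, h3, norm_nonneg u]
      have b2 : 0 ≤ ⟪g' lstar, u⟫ := hgstar_nonneg (μs n) (hμf n)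
      have b3 : ⟪T n e, u⟫ ≤ tmin⁻¹ * ‖e‖ * ‖u‖ := by
        have h2 := real_inner_le_norm (T n e) u
        have h3 := telinv_norm_le ht (hSpd n) (hS1 n) e
        nlinarith [norm_nonneg u, norm_nonneg (T n e)]
      have b4 : Tmax⁻¹ * ‖u‖ ^ 2 ≤ ⟪T n u, u⟫ := by
        have := telinv_lower hT0 (hSpd n) (hS2 n) u
        rwa [real_inner_comm] at this
      -- from h0 : 0 ≤ -(X + Y) + α⁻¹ * (-Q + Z)
      have hq1 : (α n)⁻¹ * (⟪T n u, u⟫ - ⟪T n e, u⟫) ≤ (K:ℝ) * ‖e‖ * ‖u‖ := by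
        have hexp : (α n)⁻¹ * (-⟪T n u, u⟫ + ⟪T n e, u⟫) =
            -((α n)⁻¹ * (⟪T n u, u⟫ - ⟪T n e, u⟫)) := by ring
        rw [hexp] at h0
        linarith [b1, b2, h0]
      have hαinv : α n * (α n)⁻¹ = 1 := mul_inv_cancel₀ (hαpos n).ne'
      have hq2 : ⟪T n u, u⟫ - ⟪T n e, u⟫ ≤ α n * ((K:ℝ) * ‖e‖ * ‖u‖) := by
        have := mul_le_mul_of_nonneg_left hq1 (hαpos n).le
        rwa [← mul_assoc, hαinv, one_mul] at this
      have hq3 : Tmax⁻¹ * ‖u‖ ^ 2 ≤ ((K:ℝ) + tmin⁻¹) * (‖e‖ * ‖u‖) := by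
        have hα1n := hαle n
        have hKe : 0 ≤ (K:ℝ) * ‖e‖ * ‖u‖ := by positivity
        nlinarith [b3, b4, hq2, hKe, (hαpos n).le]
      have hTinv : Tmax * Tmax⁻¹ = 1 := mul_inv_cancel₀ hT0.ne'
      rcases eq_or_lt_of_le (norm_nonneg u) with hu0 | hu0
      · rw [← hu0]
        positivity
      · rw [hC]
        nlinarith [hq3, hTinv, hT0, hu0, mul_pos hT0 hu0]
    set D := (K:ℝ) + αmin⁻¹ * (tmin⁻¹ * (C + 1)) with hD
    have hwb : ∀ n, ‖w n - g' lstar‖ ≤ D * ‖lam n - lstar‖ := by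
      intro n
      have e0 : w n - g' lstar =
          (g' (lam n) - g' lstar) + (α n)⁻¹ • T n (μs n - lam n) := by
        rw [hw]; exact add_sub_right_comm _ _ _
      rw [e0]
      refine le_trans (norm_add_le _ _) ?_
      have t2 : ‖(α n)⁻¹ • T n (μs n - lam n)‖ = (α n)⁻¹ * ‖T n (μs n - lam n)‖ := by
        rw [norm_smul, Real.norm_eq_abs, abs_of_pos (inv_pos.mpr (hαpos n))]
      have t3 : ‖T n (μs n - lam n)‖ ≤ tmin⁻¹ * ‖μs n - lam n‖ :=
        telinv_norm_le ht (hSpd n) (hS1 n) _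
      have t4 : ‖μs n - lam n‖ ≤ (C + 1) * ‖lam n - lstar‖ := by
        have hid : μs n - lam n = (μs n - lstar) - (lam n - lstar) := by abel
        rw [hid]
        refine le_trans (norm_sub_le _ _) ?_
        have := hctr n
        linarith
      have t5 : (α n)⁻¹ ≤ αmin⁻¹ := by
        exact inv_anti₀ hαmin (hαge n)
      have t6 : ‖g' (lam n) - g' lstar‖ ≤ (K:ℝ) * ‖lam n - lstar‖ := hlipn _ _
      rw [t2, hD]
      have t7 : ‖T n (μs n - lam n)‖ ≤ tmin⁻¹ * ((C + 1) * ‖lam n - lstar‖) := by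
        refine le_trans t3 ?_
        have : (0:ℝ) ≤ tmin⁻¹ := by positivity
        nlinarith [t4]
      have t8 : (α n)⁻¹ * ‖T n (μs n - lam n)‖ ≤
          αmin⁻¹ * (tmin⁻¹ * ((C + 1) * ‖lam n - lstar‖)) := by
        refine mul_le_mul t5 t7 (norm_nonneg _) (by positivity)
      nlinarith [t6, t8]
    -- pigeonhole on active sets
    set f : ℕ → Finset (Fin p) := fun n => Finset.univ.filter (fun j => ⟪a j, μs n⟫ = b j)
      with hf
    obtain ⟨B, hBinf'⟩ := Finite.exists_infinite_fiber f
    have hBinf : (f ⁻¹' {B}).Infinite :=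
      (Set.infinite_coe_iff (s := f ⁻¹' {B})).mp hBinf'
    -- slack radius
    set G : Finset (Fin p) := Finset.univ.filter (fun j => ⟪a j, lstar⟫ ≠ b j) with hG
    set δ : ℝ := if hGne : G.Nonempty then
        min 1 (G.inf' hGne fun j => (b j - ⟪a j, lstar⟫) / (‖a j‖ + 1)) else 1 with hδ
    have hδG : ∀ j ∈ G, 0 < (b j - ⟪a j, lstar⟫) / (‖a j‖ + 1) := by
      intro j hj
      rw [hG, Finset.mem_filter] at hj
      have h1 : ⟪a j, lstar⟫ < b j := lt_of_le_of_ne (hlstar j) hj.2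
      exact div_pos (by linarith) (by positivity)
    have hδpos : 0 < δ := by
      rw [hδ]
      split_ifs with hGne
      · exact lt_min one_pos (by rw [Finset.lt_inf'_iff]; exact hδG)
      · exact one_pos
    have hslack : ∀ x : EuclideanSpace ℝ (Fin m), ‖x - lstar‖ < δ →
        ∀ j, ⟪a j, lstar⟫ ≠ b j → ⟪a j, x⟫ < b j := by
      intro x hx j hj
      have hjG : j ∈ G := by rw [hG, Finset.mem_filter]; exact ⟨Finset.mem_univ _, hj⟩
      have hδle : δ ≤ (b j - ⟪a j, lstar⟫) / (‖a j‖ + 1) := by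
        have hGne : G.Nonempty := ⟨j, hjG⟩
        rw [hδ, dif_pos hGne]
        exact le_trans (min_le_right _ _) (Finset.inf'_le _ hjG)
      have hden : (0:ℝ) < ‖a j‖ + 1 := by positivity
      have h5 : δ * (‖a j‖ + 1) ≤ b j - ⟪a j, lstar⟫ := by
        rw [← le_div_iff₀ hden]; exact hδle
      have h1 : ⟪a j, x⟫ = ⟪a j, lstar⟫ + ⟪a j, x - lstar⟫ := by
        rw [inner_sub_right]; ring
      have h2 : ⟪a j, x - lstar⟫ ≤ ‖a j‖ * ‖x - lstar‖ := real_inner_le_norm _ _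
      nlinarith [norm_nonneg (a j), hx, hδpos, h2]
    -- pick a large index in the fiber
    obtain ⟨N, hN⟩ := exists_nat_gt (C / δ)
    obtain ⟨mm, hmmF, hmmN⟩ := hBinf.exists_gt N
    have hfm : f mm = B := hmmF
    have hmmnear : ‖μs mm - lstar‖ < δ := by
      have h1 : ‖μs mm - lstar‖ ≤ C * ‖lam mm - lstar‖ := hctr mm
      have h2 : ‖lam mm - lstar‖ < 1 / ((mm:ℝ)+1) := hlamnear mm
      have h3 : C * ‖lam mm - lstar‖ ≤ C * (1 / ((mm:ℝ)+1)) :=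
        mul_le_mul_of_nonneg_left h2.le hC0
      have hmm1 : (0:ℝ) < (mm:ℝ) + 1 := by positivity
      have h4 : C < δ * ((mm:ℝ)+1) := by
        have h5 : C < δ * N := by
          rw [div_lt_iff₀ hδpos] at hN
          linarith [hN]
        have h6 : (N:ℝ) ≤ (mm:ℝ) := by exact_mod_cast hmmN.le
        nlinarith [hδpos]
      have h7 : C * (1 / ((mm:ℝ)+1)) < δ := by
        rw [mul_one_div, div_lt_iff₀ hmm1]
        linarith
      linarith
    have hactm : ∀ j, ⟪a j, μs mm⟫ = b j ↔ j ∈ B := by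
      intro j
      rw [← hfm, hf]
      simp
    have hBsub : ∀ j ∈ B, ⟪a j, lstar⟫ = b j := by
      intro j hj
      by_contra hne'
      have h1 : ⟪a j, μs mm⟫ < b j := hslack _ hmmnear j hne'
      have h2 : ⟪a j, μs mm⟫ = b j := (hactm j).mpr hj
      linarith
    set d := μs mm - lstar with hdd
    have hperp : ∀ n ∈ (f ⁻¹' {B} : Set ℕ), ∀ j, ⟪a j, μs n⟫ = b j → ⟪a j, d⟫ = 0 := by
      intro n hn j hj
      have hfn : f n = B := hn
      have hjB : j ∈ B := by
        rw [← hfn, hf, Finset.mem_filter]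
        exact ⟨Finset.mem_univ _, hj⟩
      have h1 : ⟪a j, μs mm⟫ = b j := (hactm j).mpr hjB
      have h2 := hBsub j hjB
      rw [hdd, inner_sub_right, h1, h2, sub_self]
    have haux : ∀ d' : EuclideanSpace ℝ (Fin m),
        (∀ n ∈ (f ⁻¹' {B} : Set ℕ), 0 ≤ ⟪w n, d'⟫) → 0 ≤ ⟪g' lstar, d'⟫ := by
      intro d' hd'
      by_contra hneg
      push_neg at hneg
      have hD0 : (0:ℝ) ≤ D := by rw [hD]; positivity
      set η := -⟪g' lstar, d'⟫ with hη
      have hηpos : 0 < η := by rw [hη]; linarith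
      obtain ⟨N2, hN2⟩ := exists_nat_gt (D * ‖d'‖ / η)
      obtain ⟨n, hnF, hnN⟩ := hBinf.exists_gt N2
      have h1 : 0 ≤ ⟪w n, d'⟫ := hd' n hnF
      have h2 : ⟪w n - g' lstar, d'⟫ ≤ ‖w n - g' lstar‖ * ‖d'‖ := real_inner_le_norm _ _
      have h3 : ‖w n - g' lstar‖ * ‖d'‖ ≤ D * ‖lam n - lstar‖ * ‖d'‖ :=
        mul_le_mul_of_nonneg_right (hwb n) (norm_nonneg _)
      have h4 : ‖lam n - lstar‖ < 1 / ((n:ℝ)+1) := hlamnear n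
      have hn1 : (0:ℝ) < (n:ℝ) + 1 := by positivity
      have h5 : D * ‖lam n - lstar‖ * ‖d'‖ ≤ D * ‖d'‖ * (1 / ((n:ℝ)+1)) := by
        have : D * ‖lam n - lstar‖ ≤ D * (1 / ((n:ℝ)+1)) :=
          mul_le_mul_of_nonneg_left h4.le hD0
        nlinarith [norm_nonneg d']
      have h6 : D * ‖d'‖ * (1 / ((n:ℝ)+1)) < η := by
        rw [mul_one_div, div_lt_iff₀ hn1]
        have h7 : D * ‖d'‖ < η * N2 := by
          rw [div_lt_iff₀ hηpos] at hN2
          linarith [hN2]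
        have h8 : (N2:ℝ) ≤ (n:ℝ) := by exact_mod_cast hnN.le
        nlinarith [hηpos]
      have h9 : ⟪w n, d'⟫ = ⟪w n - g' lstar, d'⟫ + ⟪g' lstar, d'⟫ := by
        rw [inner_sub_left]; ring
      rw [hη] at h6
      have hx : ⟪w n - g' lstar, d'⟫ < -⟪g' lstar, d'⟫ :=
        lt_of_le_of_lt (h2.trans (h3.trans h5)) h6
      have hy : ⟪w n, d'⟫ < 0 := by rw [h9]; linarith
      linarith
    have hvt : ∀ n ∈ (f ⁻¹' {B} : Set ℕ), 0 ≤ ⟪w n, d⟫ ∧ 0 ≤ ⟪w n, -d⟫ := by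
      intro n hn
      constructor
      · exact vi_tangent a b (hμf n) (hVIw n) (fun j hj => (hperp n hn j hj).le)
      · refine vi_tangent a b (hμf n) (hVIw n) (fun j hj => ?_)
        rw [inner_neg_right]
        have := hperp n hn j hj
        linarith
    have h1 : 0 ≤ ⟪g' lstar, d⟫ := haux d (fun n hn => (hvt n hn).1)
    have h2 : 0 ≤ ⟪g' lstar, -d⟫ := haux (-d) (fun n hn => (hvt n hn).2)
    have h3 : ⟪g' lstar, d⟫ = 0 := by
      rw [inner_neg_right] at h2
      linarith
    have hsum : ∑ j ∈ A, c j * ⟪a j, d⟫ = 0 := by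
      have := hgl d
      rw [h3] at this
      linarith
    have heach : ∀ j ∈ A, ⟪a j, μs mm⟫ = b j := by
      have hnonpos : ∀ j ∈ A, c j * ⟪a j, d⟫ ≤ 0 := by
        intro j hj
        have h4 : ⟪a j, d⟫ = ⟪a j, μs mm⟫ - b j := by
          rw [hdd, inner_sub_right, (hAiff j).mp hj]
        have h5 := hμf mm j
        exact mul_nonpos_of_nonneg_of_nonpos (hcpos j hj).le (by rw [h4]; linarith)
      intro j hj
      have hz : c j * ⟪a j, d⟫ = 0 :=
        (Finset.sum_eq_zero_iff_of_nonpos hnonpos).mp hsum j hj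
      have h4 : ⟪a j, d⟫ = 0 := by
        rcases mul_eq_zero.mp hz with h | h
        · exact absurd h (hcpos j hj).ne'
        · exact h
      have h5 : ⟪a j, d⟫ = ⟪a j, μs mm⟫ - b j := by
        rw [hdd, inner_sub_right, (hAiff j).mp hj]
      linarith [h4, h5]
    exact hne mm (by
      ext j
      simp only [Set.mem_setOf_eq]
      constructor
      · intro hj
        exact hBsub j ((hactm j).mp hj)
      · intro hj
        exact heach j ((hAiff j).mpr hj))
  refine ⟨main, ?_⟩
  intro lamseq hseqΛ hseqstep hseqtend
  obtain ⟨r, hr, hid⟩ := main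
  have hnear : ∀ᶠ k in atTop, ‖lamseq k - lstar‖ < r := by
    have := Metric.tendsto_atTop.mp hseqtend r hr
    obtain ⟨N, hN⟩ := this
    refine eventually_atTop.mpr ⟨N, fun k hk => ?_⟩
    have := hN k hk
    rwa [dist_eq_norm] at this
  obtain ⟨N, hN⟩ := eventually_atTop.mp hnear
  refine eventually_atTop.mpr ⟨N + 1, fun k hk => ?_⟩
  obtain ⟨j, rfl⟩ : ∃ j, k = j + 1 :=
    ⟨k - 1, (Nat.succ_pred_eq_of_pos (lt_of_lt_of_le (Nat.succ_pos N) hk)).symm⟩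
  have hjN : N ≤ j := by omega
  exact hid (lamseq j) (hseqΛ j) (hN j hjN) (lamseq (j + 1)) (hseqstep j)
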